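/- 2τ̂ = ((c+3)/4) r(r−1) − ((c−1)/2)(r−1) − ‖N‖² + Σ_{i=1}^r Σ_{j=1}^r ‖T(U_i, U_j)‖². -/

import Mathlib

open scoped RealInnerProductSpace

lemma double_sum_lt {r : ℕ} (f : Fin r → Fin r → ℝ)
    (hsym : ∀ i j, f i j = f j i) (hdiag : ∀ i, f i i = 0) :
    ∑ i, ∑ j, f i j = 2 * ∑ i, ∑ j ∈ Finset.univ.filter (fun j => i < j), f i j := by
  have h1 : ∀ i j : Fin r, f i j =
      (if i < j then f i j else 0) + (if j < i then f i j else 0) := by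
    intro i j
    rcases lt_trichotomy i j with h | h | h
    · simp [h, not_lt_of_gt h]
    · simp [h, hdiag]
    · simp [h, not_lt_of_gt h]
  calc ∑ i, ∑ j, f i j
      = ∑ i, ∑ j, ((if i < j then f i j else 0) + (if j < i then f i j else 0)) := by
        simp_rw [← h1]
    _ = (∑ i, ∑ j, if i < j then f i j else 0) + ∑ i, ∑ j, if j < i then f i j else 0 := by
        simp [Finset.sum_add_distrib]
    _ = 2 * ∑ i, ∑ j ∈ Finset.univ.filter (fun j => i < j), f i j := by
        have h2 : (∑ i, ∑ j, if j < i then f i j else 0)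
            = ∑ i, ∑ j, if i < j then f i j else 0 := by
          rw [Finset.sum_comm]
          exact Finset.sum_congr rfl fun i _ => Finset.sum_congr rfl fun j _ => by
            rw [hsym]
        rw [h2]
        simp [Finset.sum_filter]
        ring

/-- Scalar curvature identity for the fibers (vertical Reeb vector field). -/
theorem stmt_4 {V W : Type*} [NormedAddCommGroup V] [InnerProductSpace ℝ V]
    [NormedAddCommGroup W] [InnerProductSpace ℝ W]
    (c : ℝ) (r : ℕ) (hr : 0 < r)
    (U : OrthonormalBasis (Fin r) ℝ V)
    (ξ : V) (hξ : ‖ξ‖ = 1) (η : V → ℝ) (hη : ∀ X, η X = ⟪X, ξ⟫)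
    (T : V →ₗ[ℝ] V →ₗ[ℝ] W) (hT : ∀ X Y, T X Y = T Y X)
    (N : W) (hN : N = ∑ j, T (U j) (U j))
    (Rhat : V → V → V → V → ℝ)
    (hRhat : ∀ X Y Z W', Rhat X Y Z W' =
      (c + 3) / 4 * (⟪Y, Z⟫ * ⟪X, W'⟫ - ⟪X, Z⟫ * ⟪Y, W'⟫)
        + (c - 1) / 4 * (η X * η Z * ⟪Y, W'⟫ - η Y * η Z * ⟪X, W'⟫
            + η Y * η W' * ⟪X, Z⟫ - η X * η W' * ⟪Y, Z⟫)
        - ⟪T X W', T Y Z⟫ + ⟪T Y W', T X Z⟫)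
    (τ : ℝ) (hτ : τ = ∑ i, ∑ j ∈ Finset.univ.filter (fun j => i < j),
      Rhat (U i) (U j) (U j) (U i)) :
    2 * τ = (c + 3) / 4 * ((r : ℝ) * ((r : ℝ) - 1))
      - (c - 1) / 2 * ((r : ℝ) - 1) - ‖N‖ ^ 2
      + ∑ i, ∑ j, ‖T (U i) (U j)‖ ^ 2 := by
  have hite : ∀ i j : Fin r, ⟪U i, U j⟫ = if i = j then (1:ℝ) else 0 :=
    orthonormal_iff_ite.mp U.orthonormal
  set f : Fin r → Fin r → ℝ := fun i j => Rhat (U i) (U j) (U j) (U i) with hf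
  have hsym : ∀ i j, f i j = f j i := by
    intro i j
    simp only [hf, hRhat]
    rw [real_inner_comm (U i) (U j), real_inner_comm (T (U i) (U i)) (T (U j) (U j)),
      real_inner_comm (T (U j) (U i)) (T (U i) (U j))]
    ring
  have hdiag : ∀ i, f i i = 0 := by
    intro i; simp only [hf, hRhat]; ring
  have h2τ : 2 * τ = ∑ i, ∑ j, f i j := by
    rw [hτ, ← double_sum_lt f hsym hdiag]
  rw [h2τ]
  -- rewrite each summand
  have key : ∀ i j : Fin r, f i j =
      (c + 3) / 4 * (1 - (if i = j then (1:ℝ) else 0))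
      + (c - 1) / 4 * (2 * (⟪U i, ξ⟫ * ⟪U j, ξ⟫) * (if i = j then (1:ℝ) else 0)
          - ⟪U j, ξ⟫ ^ 2 - ⟪U i, ξ⟫ ^ 2)
      - ⟪T (U i) (U i), T (U j) (U j)⟫ + ‖T (U i) (U j)‖ ^ 2 := by
    intro i j
    simp only [hf, hRhat, hη, hite, hT (U j) (U i), real_inner_self_eq_norm_sq,
      if_true]
    by_cases h : i = j
    · subst h; simp; ring_nf; simp
    · have h' : ¬ j = i := fun hh => h hh.symm
      simp only [if_neg h, if_neg h']; ring
  simp_rw [key]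
  have hsum_ite : ∀ i : Fin r, ∑ j, (if i = j then (1:ℝ) else 0) = 1 := by
    intro i; simp
  have ha : ∑ i, ⟪U i, ξ⟫ ^ 2 = 1 := by
    have := U.sum_inner_mul_inner ξ ξ
    rw [real_inner_self_eq_norm_sq, hξ] at this
    calc ∑ i, ⟪U i, ξ⟫ ^ 2 = ∑ i, ⟪ξ, U i⟫ * ⟪U i, ξ⟫ := by
          refine Finset.sum_congr rfl fun i _ => ?_
          rw [real_inner_comm ξ (U i)]; ring
      _ = 1 := by rw [this]; norm_num
  have hNsq : ∑ i : Fin r, ∑ j : Fin r, ⟪T (U i) (U i), T (U j) (U j)⟫ = ‖N‖ ^ 2 := by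
    rw [hN, ← real_inner_self_eq_norm_sq, sum_inner]
    exact Finset.sum_congr rfl fun i _ => by rw [inner_sum]
  -- expand everything
  simp only [Finset.sum_add_distrib, Finset.sum_sub_distrib, ← Finset.mul_sum,
    hsum_ite, hNsq]
  simp only [Finset.sum_const, Finset.card_univ, Fintype.card_fin, nsmul_eq_mul]
  have e1 : ∑ i : Fin r, ∑ j, 2 * (⟪U i, ξ⟫ * ⟪U j, ξ⟫) * (if i = j then (1:ℝ) else 0)
      = 2 := by
    have : ∀ i : Fin r, ∑ j, 2 * (⟪U i, ξ⟫ * ⟪U j, ξ⟫) * (if i = j then (1:ℝ) else 0)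
        = 2 * ⟪U i, ξ⟫ ^ 2 := by
      intro i
      rw [Finset.sum_eq_single i]
      · simp; ring
      · intro b _ hb; simp [Ne.symm hb]
      · simp
    simp_rw [this, ← Finset.mul_sum, ha]; norm_num
  rw [e1]
  simp only [← Finset.mul_sum, ha, mul_one]
  ring
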